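/- arXiv:2507.14126 — 2 statements merged into one kernel-verified Lean document; each statement's English description precedes it below -/
import Mathlib

section
/- Let E_1, …, E_K be finite-dimensional real inner product spaces, and for each k let f_k : E_k → ℝ be differentiable and L_k-smooth, h_k : E_k → ℝ be differentiable, and ρ_k > 0. Define the multi-block augmented Lagrangian L({x_k}, {y_k}, {μ_k}) = Σ_{k=1}^K [ f_k(x_k) + h_k(y_k) + ⟨μ_k, x_k − y_k⟩ + (ρ_k/2)‖x_k − y_k‖² ]. Suppose at every iteration t: (i) for each k, the map y_k ↦ L({x_k^t}, …, y_k, …, {μ_k^t}) is γ̃_k-strongly convex and y_k^{t+1} is its minimizer; (ii) for each k, the map x_k ↦ L(…, x_k, …, {y_k^{t+1}}, {μ_k^t}) is γ_k-strongly convex and x_k^{t+1} is its minimizer, so that ∇f_k(x_k^{t+1}) + μ_k^t + ρ_k(x_k^{t+1} − y_k^{t+1}) = 0; (iii) μ_k^{t+1} = μ_k^t + ρ_k(x_k^{t+1} − y_k^{t+1}). Then for every t ≥ 1, L({x_k^{t+1}}, {y_k^{t+1}}, {μ_k^{t+1}}) − L({x_k^t}, {y_k^t}, {μ_k^t}) ≤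 Σ_{k=1}^K [ (L_k²/ρ_k − γ_k/2)‖x_k^{t+1} − x_k^t‖² − (γ̃_k/2)‖y_k^{t+1} − y_k^t‖² ]. -/
open scoped RealInnerProductSpace

-- strong convexity minimizer lemma
lemma strong_min {F : Type*} [NormedAddCommGroup F] [InnerProductSpace ℝ F]
    (γ : ℝ) (g : F → ℝ)
    (hc : ConvexOn ℝ Set.univ (fun z => g z - γ / 2 * ‖z‖ ^ 2))
    (w : F) (hm : ∀ z, g w ≤ g z) (z : F) :
    g w + γ / 2 * ‖z - w‖ ^ 2 ≤ g z := by
  have key : ∀ s : ℝ, 0 < s → s ≤ 1 →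
      g w + γ / 2 * (1 - s) * ‖z - w‖ ^ 2 ≤ g z := by
    intro s hs hs1
    have ht : (0:ℝ) ≤ 1 - s := by linarith
    have hcomb := hc.2 (Set.mem_univ w) (Set.mem_univ z) ht hs.le (by ring)
    simp only [smul_eq_mul] at hcomb
    have hnorm : ‖(1 - s) • w + s • z‖ ^ 2
        = (1 - s) * ‖w‖ ^ 2 + s * ‖z‖ ^ 2 - (1 - s) * s * ‖z - w‖ ^ 2 := by
      have h1 := real_inner_self_eq_norm_sq ((1 - s) • w + s • z)
      have h2 := real_inner_self_eq_norm_sq (z - w)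
      have h3 := real_inner_self_eq_norm_sq w
      have h4 := real_inner_self_eq_norm_sq z
      simp only [inner_add_add_self, inner_sub_sub_self, real_inner_smul_left,
        real_inner_smul_right, real_inner_comm w z] at h1 h2
      linear_combination (-1) * h1 + (1 - s) * h3 + s * h4 - (1 - s) * s * h2
    have hgw := hm ((1 - s) • w + s • z)
    rw [hnorm] at hcomb
    have h6 : g w + γ / 2 * ((1 - s) * s) * ‖z - w‖ ^ 2
        ≤ (1 - s) * g w + s * g z := by nlinarith [hcomb, hgw]
    nlinarith [h6, hs]
  rcases le_or_gt (γ / 2 * ‖z - w‖ ^ 2) 0 with hle | hpos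
  · linarith [hm z]
  · refine le_of_forall_pos_le_add ?_
    intro ε hε
    set C := γ / 2 * ‖z - w‖ ^ 2 with hC
    set s := min (ε / C) 1 with hsdef
    have hs0 : 0 < s := lt_min (div_pos hε hpos) one_pos
    have hs1 : s ≤ 1 := min_le_right _ _
    have hk := key s hs0 hs1
    have hsC : s * C ≤ ε := by
      calc s * C ≤ (ε / C) * C := mul_le_mul_of_nonneg_right (min_le_left _ _) hpos.le
      _ = ε := div_mul_cancel₀ _ (ne_of_gt hpos)
    nlinarith [hk]

lemma sum_update_eq {K : ℕ} {E : Fin K → Type*} (G : ∀ k, E k → ℝ) (v : ∀ k, E k)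
    (k : Fin K) (z : E k) :
    ∑ j, G j (Function.update v k z j) = (∑ j, G j (v j)) + (G k z - G k (v k)) := by
  have hpt : ∀ j : Fin K, G j (Function.update v k z j)
      = G j (v j) + (if j = k then G k z - G k (v k) else 0) := by
    intro j
    by_cases hj : j = k
    · subst hj; simp
    · simp [Function.update_of_ne hj, hj]
  rw [Finset.sum_congr rfl fun j _ => hpt j, Finset.sum_add_distrib]
  simp

lemma block_ineq {K : ℕ} {E : Fin K → Type*}
    [∀ k, NormedAddCommGroup (E k)] [∀ k, InnerProductSpace ℝ (E k)]
    (G : ∀ k, E k → ℝ) (γ : ℝ) (v : ∀ k, E k) (k : Fin K) (w : E k)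
    (hconv : ConvexOn ℝ Set.univ
      (fun z : E k => (∑ j, G j (Function.update v k z j)) - γ / 2 * ‖z‖ ^ 2))
    (hmin : ∀ z : E k, (∑ j, G j (Function.update v k w j))
      ≤ ∑ j, G j (Function.update v k z j)) :
    G k w + γ / 2 * ‖v k - w‖ ^ 2 ≤ G k (v k) := by
  have hmain := strong_min γ (fun z : E k => ∑ j, G j (Function.update v k z j))
    hconv w hmin (v k)
  simp only [sum_update_eq G v k] at hmain
  linarith

/-- One-step descent estimate for the multi-block augmented Lagrangian
`L({x_k},{y_k},{μ_k}) = Σ_k [f_k(x_k) + h_k(y_k) + ⟪μ_k, x_k − y_k⟫ + (ρ_k/2)‖x_k − y_k‖²]`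
under exact strongly convex block minimizations and the dual updates. -/

theorem stmt3 {K : ℕ} (E : Fin K → Type*)
    [∀ k, NormedAddCommGroup (E k)] [∀ k, InnerProductSpace ℝ (E k)]
    [∀ k, FiniteDimensional ℝ (E k)]
    (f h : ∀ k, E k → ℝ) (L ρ γ γ' : Fin K → ℝ)
    (hdiff : ∀ k, Differentiable ℝ (f k))
    (hsmooth : ∀ k, ∀ a a' : E k,
      ‖gradient (f k) a - gradient (f k) a'‖ ≤ L k * ‖a - a'‖)
    (hdiffh : ∀ k, Differentiable ℝ (h k))
    (hρ : ∀ k, 0 < ρ k)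
    (Lag : (∀ k, E k) → (∀ k, E k) → (∀ k, E k) → ℝ)
    (hLag : ∀ x y μ, Lag x y μ =
      ∑ k, (f k (x k) + h k (y k) + ⟪μ k, x k - y k⟫ + (ρ k / 2) * ‖x k - y k‖ ^ 2))
    (x y μ : ℕ → ∀ k, E k)
    -- (i) each `y_k`-subproblem is `γ'_k`-strongly convex and `y_k^{t+1}` minimizes it
    (hyconv : ∀ (t : ℕ) (k : Fin K), ConvexOn ℝ Set.univ
      (fun z : E k => Lag (x t) (Function.update (y t) k z) (μ t) - (γ' k / 2) * ‖z‖ ^ 2))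
    (hymin : ∀ (t : ℕ) (k : Fin K), ∀ z : E k,
      Lag (x t) (Function.update (y t) k (y (t + 1) k)) (μ t) ≤
        Lag (x t) (Function.update (y t) k z) (μ t))
    -- (ii) each `x_k`-subproblem is `γ_k`-strongly convex, `x_k^{t+1}` minimizes it,
    -- so that the first-order optimality condition holds
    (hxconv : ∀ (t : ℕ) (k : Fin K), ConvexOn ℝ Set.univ
      (fun z : E k => Lag (Function.update (x t) k z) (y (t + 1)) (μ t)
        - (γ k / 2) * ‖z‖ ^ 2))
    (hxmin : ∀ (t : ℕ) (k : Fin K), ∀ z : E k,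
      Lag (Function.update (x t) k (x (t + 1) k)) (y (t + 1)) (μ t) ≤
        Lag (Function.update (x t) k z) (y (t + 1)) (μ t))
    (hopt : ∀ (t : ℕ) (k : Fin K), gradient (f k) (x (t + 1) k) + μ t k
        + ρ k • (x (t + 1) k - y (t + 1) k) = 0)
    -- (iii) dual updates
    (hdual : ∀ (t : ℕ) (k : Fin K),
      μ (t + 1) k = μ t k + ρ k • (x (t + 1) k - y (t + 1) k)) :
    ∀ t : ℕ, 1 ≤ t →
      Lag (x (t + 1)) (y (t + 1)) (μ (t + 1)) - Lag (x t) (y t) (μ t) ≤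
        ∑ k, ((L k ^ 2 / ρ k - γ k / 2) * ‖x (t + 1) k - x t k‖ ^ 2
          - (γ' k / 2) * ‖y (t + 1) k - y t k‖ ^ 2) := by
  intro t ht
  -- μ is minus the gradient along the trajectory
  have hμ : ∀ s : ℕ, μ (s + 1) = fun k => - gradient (f k) (x (s + 1) k) := by
    intro s
    funext k
    have h1 := hopt s k
    rw [hdual s k]
    have h1' : (μ s k + ρ k • (x (s + 1) k - y (s + 1) k))
        + gradient (f k) (x (s + 1) k) = 0 := by
      rw [← h1]; abel
    exact eq_neg_of_add_eq_zero_left h1'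
  -- per-block x functions
  set Gx : ∀ k, E k → ℝ := fun k z =>
    f k z + h k (y (t + 1) k) + ⟪μ t k, z - y (t + 1) k⟫
      + ρ k / 2 * ‖z - y (t + 1) k‖ ^ 2 with hGx
  set Gy : ∀ k, E k → ℝ := fun k w =>
    f k (x t k) + h k w + ⟪μ t k, x t k - w⟫ + ρ k / 2 * ‖x t k - w‖ ^ 2 with hGy
  -- x-block descent
  have hx : ∀ k, Gx k (x (t + 1) k) + γ k / 2 * ‖x t k - x (t + 1) k‖ ^ 2
      ≤ Gx k (x t k) := by
    intro k
    refine block_ineq Gx (γ k) (x t) k (x (t + 1) k) ?_ ?_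
    · have := hxconv t k
      simp only [hLag] at this
      exact this
    · intro z
      have := hxmin t k z
      simp only [hLag] at this
      exact this
  -- y-block descent
  have hy : ∀ k, Gy k (y (t + 1) k) + γ' k / 2 * ‖y t k - y (t + 1) k‖ ^ 2
      ≤ Gy k (y t k) := by
    intro k
    refine block_ineq Gy (γ' k) (y t) k (y (t + 1) k) ?_ ?_
    · have := hyconv t k
      simp only [hLag] at this
      exact this
    · intro z
      have := hymin t k z
      simp only [hLag] at this
      exact this
  -- dual ascent bound per block
  have hd : ∀ k, (f k (x (t + 1) k) + h k (y (t + 1) k)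
        + ⟪μ (t + 1) k, x (t + 1) k - y (t + 1) k⟫
        + ρ k / 2 * ‖x (t + 1) k - y (t + 1) k‖ ^ 2)
      - Gx k (x (t + 1) k) ≤ L k ^ 2 / ρ k * ‖x (t + 1) k - x t k‖ ^ 2 := by
    intro k
    have hdiffμ : μ (t + 1) k - μ t k = ρ k • (x (t + 1) k - y (t + 1) k) := by
      rw [hdual t k]; abel
    have hinner : ⟪μ (t + 1) k, x (t + 1) k - y (t + 1) k⟫
        - ⟪μ t k, x (t + 1) k - y (t + 1) k⟫
        = ρ k * ‖x (t + 1) k - y (t + 1) k‖ ^ 2 := by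
      rw [← inner_sub_left, hdiffμ, real_inner_smul_left, real_inner_self_eq_norm_sq]
    -- gradient difference bound
    obtain ⟨s, rfl⟩ : ∃ s, t = s + 1 := ⟨t - 1, by omega⟩
    have hμ1 : μ (s + 1) k = - gradient (f k) (x (s + 1) k) := by rw [hμ s]
    have hμ2 : μ (s + 1 + 1) k = - gradient (f k) (x (s + 1 + 1) k) := by rw [hμ (s + 1)]
    have hnorm1 : ρ k * ‖x (s + 1 + 1) k - y (s + 1 + 1) k‖
        ≤ L k * ‖x (s + 1 + 1) k - x (s + 1) k‖ := by
      have e1 : ρ k • (x (s + 1 + 1) k - y (s + 1 + 1) k)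
          = gradient (f k) (x (s + 1) k) - gradient (f k) (x (s + 1 + 1) k) := by
        rw [← hdiffμ, hμ1, hμ2]; abel
      have e2 : ‖ρ k • (x (s + 1 + 1) k - y (s + 1 + 1) k)‖
          = ρ k * ‖x (s + 1 + 1) k - y (s + 1 + 1) k‖ := by
        rw [norm_smul, Real.norm_eq_abs, abs_of_pos (hρ k)]
      rw [← e2, e1]
      calc ‖gradient (f k) (x (s + 1) k) - gradient (f k) (x (s + 1 + 1) k)‖
          ≤ L k * ‖x (s + 1) k - x (s + 1 + 1) k‖ := hsmooth k _ _
        _ = L k * ‖x (s + 1 + 1) k - x (s + 1) k‖ := by rw [norm_sub_rev]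
    -- conclude: ρ‖d‖² ≤ L²/ρ ‖Δx‖²
    have hq : (0:ℝ) ≤ ‖x (s + 1 + 1) k - y (s + 1 + 1) k‖ := norm_nonneg _
    have hb : (0:ℝ) ≤ ‖x (s + 1 + 1) k - x (s + 1) k‖ := norm_nonneg _
    have hsq : (ρ k * ‖x (s + 1 + 1) k - y (s + 1 + 1) k‖) ^ 2
        ≤ (L k * ‖x (s + 1 + 1) k - x (s + 1) k‖) ^ 2 := by
      apply sq_le_sq' _ hnorm1
      nlinarith [mul_nonneg (hρ k).le hq]
    have hρk := hρ k
    have hfinal : ρ k * ‖x (s + 1 + 1) k - y (s + 1 + 1) k‖ ^ 2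
        ≤ L k ^ 2 / ρ k * ‖x (s + 1 + 1) k - x (s + 1) k‖ ^ 2 := by
      rw [div_mul_eq_mul_div, le_div_iff₀ hρk]
      nlinarith [hsq]
    simp only [hGx]
    linarith [hinner, hfinal]
  -- assemble
  rw [hLag, hLag, ← Finset.sum_sub_distrib]
  apply Finset.sum_le_sum
  intro k _
  have h1 := hx k
  have h2 := hy k
  have h3 := hd k
  have hGxt : Gx k (x t k) = Gy k (y (t + 1) k) := by simp only [hGx, hGy]
  have hGyt : Gy k (y t k) = f k (x t k) + h k (y t k) + ⟪μ t k, x t k - y t k⟫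
      + ρ k / 2 * ‖x t k - y t k‖ ^ 2 := by simp only [hGy]
  rw [norm_sub_rev (x t k)] at h1
  rw [norm_sub_rev (y t k)] at h2
  linarith [h1, h2, h3]
end

section
/- Let U ∈ ℝ^{I×R}, V ∈ ℝ^{J×R}, X ∈ ℝ^{I×J}, c ∈ ℝ^R, ρ > 0, and let M = V ⊙ U ∈ ℝ^{IJ×R} be the column-wise Khatri–Rao product. Then (VᵀV) ∗ (UᵀU) + (ρ/2) I_R is positive definite, and the function s ↦ ‖vec(X) − M s‖₂² + (ρ/2)‖s − c‖₂² on ℝ^R has the unique minimizer s* = ( (VᵀV) ∗ (UᵀU) + (ρ/2) I_R )^{-1} ( diag(Uᵀ X V) + (ρ/2) c ), where diag(Uᵀ X V) is the vector of diagonal entries of Uᵀ X V. -/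
open Matrix

/-- `(VᵀV) ∗ (UᵀU) + (ρ/2) I` is positive definite, and
`s ↦ ‖vec(X) − M s‖₂² + (ρ/2)‖s − c‖₂²` (with `M = V ⊙ U` the column-wise Khatri–Rao
product) has the unique minimizer
`s* = ((VᵀV) ∗ (UᵀU) + (ρ/2) I)⁻¹ (diag(Uᵀ X V) + (ρ/2) c)`. -/
theorem stmt15 {I J R : ℕ} (U : Matrix (Fin I) (Fin R) ℝ) (V : Matrix (Fin J) (Fin R) ℝ)
    (X : Matrix (Fin I) (Fin J) ℝ) (c : Fin R → ℝ) (ρ : ℝ) (hρ : 0 < ρ)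
    (M : Matrix (Fin J × Fin I) (Fin R) ℝ)
    (hM : ∀ (j : Fin J) (i : Fin I) (r : Fin R), M (j, i) r = V j r * U i r)
    (vecX : Fin J × Fin I → ℝ)
    (hvec : ∀ (j : Fin J) (i : Fin I), vecX (j, i) = X i j)
    (φ : (Fin R → ℝ) → ℝ)
    (hφ : ∀ s : Fin R → ℝ,
      φ s = (∑ p : Fin J × Fin I, (vecX p - M.mulVec s p) ^ 2)
        + (ρ / 2) * ∑ r : Fin R, (s r - c r) ^ 2)
    (sstar : Fin R → ℝ)
    (hsstar : sstar = (Matrix.hadamard (Vᵀ * V) (Uᵀ * U)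
        + (ρ / 2) • (1 : Matrix (Fin R) (Fin R) ℝ))⁻¹.mulVec
      (fun r => (Uᵀ * X * V) r r + (ρ / 2) * c r)) :
    (Matrix.hadamard (Vᵀ * V) (Uᵀ * U)
      + (ρ / 2) • (1 : Matrix (Fin R) (Fin R) ℝ)).PosDef ∧
    ∀ s : Fin R → ℝ, s ≠ sstar → φ sstar < φ s := by
  set Q : Matrix (Fin R) (Fin R) ℝ :=
    Matrix.hadamard (Vᵀ * V) (Uᵀ * U) + (ρ / 2) • (1 : Matrix (Fin R) (Fin R) ℝ) with hQdef
  have hQ : Q = Mᵀ * M + (ρ / 2) • (1 : Matrix (Fin R) (Fin R) ℝ) := by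
    have hmm : ∀ r r', (Mᵀ * M) r r' = Matrix.hadamard (Vᵀ * V) (Uᵀ * U) r r' := by
      intro r r'
      simp only [Matrix.mul_apply, Matrix.transpose_apply, Matrix.hadamard_apply]
      rw [Fintype.sum_prod_type, Finset.sum_mul_sum]
      refine Finset.sum_congr rfl fun j _ => Finset.sum_congr rfl fun i _ => ?_
      rw [hM, hM]; ring
    ext r r'
    simp [hQdef, Matrix.add_apply, hmm r r']
  have hquad : ∀ x : Fin R → ℝ, dotProduct x (Q *ᵥ x)
      = (∑ p, (M.mulVec x p) ^ 2) + (ρ / 2) * ∑ r, (x r) ^ 2 := by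
    intro x
    rw [hQ, Matrix.add_mulVec, dotProduct_add, ← Matrix.mulVec_mulVec,
      Matrix.dotProduct_mulVec, Matrix.vecMul_transpose, Matrix.smul_mulVec,
      Matrix.one_mulVec]
    congr 1
    · simp [dotProduct, pow_two]
    · simp only [dotProduct, Pi.smul_apply, smul_eq_mul, Finset.mul_sum]
      exact Finset.sum_congr rfl fun r _ => by ring
  have hPD : Q.PosDef := by
    rw [Matrix.posDef_iff_dotProduct_mulVec]
    constructor
    · rw [Matrix.IsHermitian, Matrix.conjTranspose_eq_transpose_of_trivial, hQ,
        Matrix.transpose_add, Matrix.transpose_smul, Matrix.transpose_one,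
        Matrix.transpose_mul, Matrix.transpose_transpose]
    · intro x hx
      have hx' : ∃ r, x r ≠ 0 := by
        by_contra h
        push_neg at h
        exact hx (funext h)
      obtain ⟨r0, hr0⟩ := hx'
      have h1 : (0:ℝ) ≤ ∑ p, (M.mulVec x p) ^ 2 :=
        Finset.sum_nonneg fun p _ => sq_nonneg _
      have h2 : (0:ℝ) < ∑ r, (x r) ^ 2 :=
        Finset.sum_pos' (fun r _ => sq_nonneg _)
          ⟨r0, Finset.mem_univ _, lt_of_le_of_ne (sq_nonneg _) (Ne.symm (pow_ne_zero 2 hr0))⟩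
      have h3 : 0 < (ρ / 2) * ∑ r, (x r) ^ 2 := by positivity
      simp only [star_trivial]
      rw [hquad x]
      linarith
  refine ⟨hPD, ?_⟩
  have hinv : Q * Q⁻¹ = 1 := Matrix.mul_nonsing_inv Q hPD.det_pos.ne'.isUnit
  have hQs : Q *ᵥ sstar = fun r => (Uᵀ * X * V) r r + (ρ / 2) * c r := by
    rw [hsstar, Matrix.mulVec_mulVec, hinv, Matrix.one_mulVec]
  have hG : ∀ r, ∑ p, (vecX p - M.mulVec sstar p) * M p r = (ρ / 2) * (sstar r - c r) := by
    intro r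
    have hA : ∑ p : Fin J × Fin I, vecX p * M p r = (Uᵀ * X * V) r r := by
      simp only [Matrix.mul_apply, Matrix.transpose_apply, Finset.sum_mul]
      rw [Fintype.sum_prod_type]
      refine Finset.sum_congr rfl fun j _ => Finset.sum_congr rfl fun i _ => ?_
      rw [hvec, hM]; ring
    have hB : ∑ p, M.mulVec sstar p * M p r
        = (Uᵀ * X * V) r r + (ρ / 2) * c r - (ρ / 2) * sstar r := by
      have h1 : ∑ p, M.mulVec sstar p * M p r = ((Mᵀ * M) *ᵥ sstar) r := by
        rw [← Matrix.mulVec_mulVec]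
        simp only [Matrix.mulVec, dotProduct, Matrix.transpose_apply]
        exact Finset.sum_congr rfl fun p _ => mul_comm _ _
      have h2 : Q *ᵥ sstar = (Mᵀ * M) *ᵥ sstar + (ρ / 2) • sstar := by
        rw [hQ, Matrix.add_mulVec, Matrix.smul_mulVec, Matrix.one_mulVec]
      have h3 : ((Mᵀ * M) *ᵥ sstar) r + (ρ / 2) * sstar r
          = (Uᵀ * X * V) r r + (ρ / 2) * c r := by
        have h4 := congrFun h2 r
        have h5 := congrFun hQs r
        simp only [Pi.add_apply, Pi.smul_apply, smul_eq_mul] at h4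
        rw [h4] at h5
        linarith
      rw [h1]; linarith
    calc ∑ p, (vecX p - M.mulVec sstar p) * M p r
        = ∑ p, vecX p * M p r - ∑ p, M.mulVec sstar p * M p r := by
          rw [← Finset.sum_sub_distrib]
          exact Finset.sum_congr rfl fun p _ => by ring
      _ = (ρ / 2) * (sstar r - c r) := by rw [hA, hB]; ring
  intro s hs
  set d : Fin R → ℝ := fun r => s r - sstar r with hddef
  have hMd : ∀ p, M.mulVec s p = M.mulVec sstar p + M.mulVec d p := by
    intro p
    simp only [Matrix.mulVec, dotProduct, hddef]
    rw [← Finset.sum_add_distrib]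
    exact Finset.sum_congr rfl fun r _ => by ring
  have hcross : ∑ p, (vecX p - M.mulVec sstar p) * M.mulVec d p
      = (ρ / 2) * ∑ r, (sstar r - c r) * d r := by
    have h6 : ∀ p, (vecX p - M.mulVec sstar p) * M.mulVec d p
        = ∑ r, (vecX p - M.mulVec sstar p) * M p r * d r := by
      intro p
      simp only [Matrix.mulVec, dotProduct, Finset.mul_sum]
      exact Finset.sum_congr rfl fun r _ => by ring
    rw [Finset.sum_congr rfl fun p _ => h6 p, Finset.sum_comm, Finset.mul_sum]
    refine Finset.sum_congr rfl fun r _ => ?_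
    rw [← Finset.sum_mul, hG r]; ring
  have e1 : ∑ p, (vecX p - M.mulVec s p) ^ 2
      = ∑ p, (vecX p - M.mulVec sstar p) ^ 2 + ∑ p, (M.mulVec d p) ^ 2
        - 2 * ∑ p, (vecX p - M.mulVec sstar p) * M.mulVec d p := by
    rw [Finset.mul_sum, ← Finset.sum_add_distrib, ← Finset.sum_sub_distrib]
    exact Finset.sum_congr rfl fun p _ => by rw [hMd p]; ring
  have e2 : ∑ r, (s r - c r) ^ 2
      = ∑ r, (sstar r - c r) ^ 2 + ∑ r, (d r) ^ 2 + 2 * ∑ r, (sstar r - c r) * d r := by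
    rw [Finset.mul_sum, ← Finset.sum_add_distrib, ← Finset.sum_add_distrib]
    refine Finset.sum_congr rfl fun r _ => ?_
    have hsr : s r = sstar r + d r := by simp [hddef]
    rw [hsr]; ring
  have hd0 : ∃ r, d r ≠ 0 := by
    by_contra h
    push_neg at h
    apply hs
    funext r
    have h7 := h r
    simp only [hddef] at h7
    linarith
  obtain ⟨r0, hr0⟩ := hd0
  have hpos2 : (0:ℝ) < ∑ r, (d r) ^ 2 :=
    Finset.sum_pos' (fun r _ => sq_nonneg _)
      ⟨r0, Finset.mem_univ _, lt_of_le_of_ne (sq_nonneg _) (Ne.symm (pow_ne_zero 2 hr0))⟩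
  have hpos1 : (0:ℝ) ≤ ∑ p, (M.mulVec d p) ^ 2 := Finset.sum_nonneg fun p _ => sq_nonneg _
  have key : φ s = φ sstar + ((∑ p, (M.mulVec d p) ^ 2) + (ρ / 2) * ∑ r, (d r) ^ 2) := by
    rw [hφ s, hφ sstar, e1, e2, hcross]; ring
  have hposr : 0 < (∑ p, (M.mulVec d p) ^ 2) + (ρ / 2) * ∑ r, (d r) ^ 2 := by
    have := mul_pos (by linarith : (0:ℝ) < ρ / 2) hpos2
    linarith
  linarith [key]
end
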